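/- Let 0 < κ < 1, let (η_j)_{j≥1} be real numbers with 0 < η_j < 1 for all j, and let m < t be nonnegative integers with m + 1 ≤ t − 1. Then Σ_{i=m+1}^{t−1} η_i · Π_{j=i+1}^{t} (1 − (1−κ)·η_j) ≤ 1/(1−κ). -/
import Mathlib


/-- for `0 < κ < 1`, learning rates `0 < η_j < 1`, and nonnegative integers
`m < t` with `m + 1 ≤ t − 1`,
`Σ_{i=m+1}^{t−1} η_i · Π_{j=i+1}^{t} (1 − (1−κ)·η_j) ≤ 1/(1−κ)`. -/
theorem stmt12 (κ : ℝ) (hκ0 : 0 < κ) (hκ1 : κ < 1)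
    (η : ℕ → ℝ) (hη : ∀ j, 0 < η j ∧ η j < 1)
    (m t : ℕ) (hmt : m < t) (hmt' : m + 1 ≤ t - 1) :
    ∑ i ∈ Finset.Icc (m + 1) (t - 1),
        η i * ∏ j ∈ Finset.Icc (i + 1) t, (1 - (1 - κ) * η j) ≤ 1 / (1 - κ) := by
  set c := 1 - κ with hc_def
  have hc : 0 < c := by rw [hc_def]; linarith
  have hP : ∀ j, 0 < 1 - c * η j := by
    intro j
    have h1 := (hη j).1; have h2 := (hη j).2
    nlinarith
  set P : ℕ → ℝ := fun i => ∏ j ∈ Finset.Icc i t, (1 - c * η j) with hPdef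
  have hPpos : ∀ i, 0 < P i := fun i => Finset.prod_pos (fun j _ => hP j)
  have hIcc : Finset.Icc (m + 1) (t - 1) = Finset.Ico (m + 1) t := by
    ext x; simp only [Finset.mem_Icc, Finset.mem_Ico]; omega
  have hstep : ∀ i ∈ Finset.Ico (m + 1) t,
      c * (η i * P (i + 1)) = P (i + 1) - P i := by
    intro i hi
    have hit : i ≤ t := le_of_lt (Finset.mem_Ico.mp hi).2
    have hsplit : Finset.Icc i t = insert i (Finset.Icc (i + 1) t) := by
      ext x; simp only [Finset.mem_Icc, Finset.mem_insert]; omega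
    have hnm : i ∉ Finset.Icc (i + 1) t := by simp
    have : P i = (1 - c * η i) * P (i + 1) := by
      rw [hPdef]; simp only; rw [hsplit, Finset.prod_insert hnm]
    rw [this]; ring
  have tel : ∀ b, m + 1 ≤ b →
      ∑ i ∈ Finset.Ico (m + 1) b, (P (i + 1) - P i) = P b - P (m + 1) := by
    intro b hb
    induction b, hb using Nat.le_induction with
    | base => simp
    | succ n hn ih => rw [Finset.sum_Ico_succ_top hn, ih]; ring
  have hsum : c * ∑ i ∈ Finset.Ico (m + 1) t,
      η i * P (i + 1) = P t - P (m + 1) := by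
    rw [Finset.mul_sum, Finset.sum_congr rfl hstep, tel t (by omega)]
  have hPt : P t ≤ 1 := by
    have : P t = 1 - c * η t := by
      rw [hPdef]; simp
    rw [this]
    nlinarith [(hη t).1]
  have hle : c * ∑ i ∈ Finset.Ico (m + 1) t, η i * P (i + 1) ≤ 1 := by
    rw [hsum]
    have := hPpos (m + 1)
    linarith
  rw [hIcc]
  show ∑ i ∈ Finset.Ico (m + 1) t, η i * P (i + 1) ≤ 1 / c
  rw [le_div_iff₀ hc, mul_comm]
  exact hle
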